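/- For every integer r with 0 ≤ r ≤ n and all matrices A, B ∈ M_n(ℝ) with rank(A) = rank(B) = r, one has rank(φ(A)) = rank(φ(B)). -/

import Mathlib

open LinearMap Submodule Module

/-- Two endomorphisms of a finite-dimensional space with equal rank differ by automorphisms. -/
lemma exists_equiv_comp_of_finrank_range_eq {K V : Type*} [Field K] [AddCommGroup V]
    [Module K V] [FiniteDimensional K V] (f g : V →ₗ[K] V)
    (h : finrank K (LinearMap.range f) = finrank K (LinearMap.range g)) :
    ∃ e₁ e₂ : V ≃ₗ[K] V, g = e₂.toLinearMap ∘ₗ f ∘ₗ e₁.toLinearMap := by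
  obtain ⟨Cf, hCf⟩ := Submodule.exists_isCompl (LinearMap.ker f)
  obtain ⟨Cg, hCg⟩ := Submodule.exists_isCompl (LinearMap.ker g)
  obtain ⟨Df, hDf⟩ := Submodule.exists_isCompl (LinearMap.range f)
  obtain ⟨Dg, hDg⟩ := Submodule.exists_isCompl (LinearMap.range g)
  -- restriction isomorphisms
  let ef : Cf ≃ₗ[K] LinearMap.range f :=
    (quotientEquivOfIsCompl _ _ hCf).symm.trans f.quotKerEquivRange
  let eg : Cg ≃ₗ[K] LinearMap.range g :=
    (quotientEquivOfIsCompl _ _ hCg).symm.trans g.quotKerEquivRange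
  have hef : ∀ x : Cf, (ef x : V) = f x := fun x => f.quotKerEquivRange_apply_mk x
  have heg : ∀ x : Cg, (eg x : V) = g x := fun x => g.quotKerEquivRange_apply_mk x
  -- finrank equalities
  have hker : finrank K (LinearMap.ker g) = finrank K (LinearMap.ker f) := by
    have h1 := f.finrank_range_add_finrank_ker
    have h2 := g.finrank_range_add_finrank_ker
    omega
  have hD : finrank K Df = finrank K Dg := by
    have h1 := Submodule.finrank_add_eq_of_isCompl hDf
    have h2 := Submodule.finrank_add_eq_of_isCompl hDg
    omega
  let er : LinearMap.range f ≃ₗ[K] LinearMap.range g := LinearEquiv.ofFinrankEq _ _ h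
  let kE : LinearMap.ker g ≃ₗ[K] LinearMap.ker f := LinearEquiv.ofFinrankEq _ _ hker
  let dE : Df ≃ₗ[K] Dg := LinearEquiv.ofFinrankEq _ _ hD
  let cE : Cg ≃ₗ[K] Cf := eg.trans (er.symm.trans ef.symm)
  let e₁ : V ≃ₗ[K] V :=
    (prodEquivOfIsCompl _ _ hCg).symm.trans
      ((kE.prodCongr cE).trans (prodEquivOfIsCompl _ _ hCf))
  let e₂ : V ≃ₗ[K] V :=
    (prodEquivOfIsCompl _ _ hDf).symm.trans
      ((er.prodCongr dE).trans (prodEquivOfIsCompl _ _ hDg))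
  have he₁k : ∀ x : LinearMap.ker g, e₁ x = (kE x : V) := by
    intro x
    simp only [e₁, LinearEquiv.trans_apply, prodEquivOfIsCompl_symm_apply_left,
      LinearEquiv.prodCongr_apply, coe_prodEquivOfIsCompl', map_zero]
    simp
  have he₁c : ∀ x : Cg, e₁ x = (cE x : V) := by
    intro x
    simp only [e₁, LinearEquiv.trans_apply, prodEquivOfIsCompl_symm_apply_right,
      LinearEquiv.prodCongr_apply, coe_prodEquivOfIsCompl', map_zero]
    simp
  have he₂ : ∀ x : LinearMap.range f, e₂ x = (er x : V) := by
    intro x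
    simp only [e₂, LinearEquiv.trans_apply, prodEquivOfIsCompl_symm_apply_left,
      LinearEquiv.prodCongr_apply, coe_prodEquivOfIsCompl', map_zero]
    simp
  refine ⟨e₁, e₂, ?_⟩
  ext x
  -- decompose x along ker g ⊔ Cg = ⊤
  have hx : x ∈ (LinearMap.ker g) ⊔ Cg := by
    rw [hCg.sup_eq_top]; trivial
  obtain ⟨k, hk, c, hc, rfl⟩ := Submodule.mem_sup.1 hx
  have hgk : g k = 0 := hk
  have comp_k : e₂ (f (e₁ k)) = 0 := by
    have : e₁ k = ((kE ⟨k, hk⟩ : LinearMap.ker f) : V) := he₁k ⟨k, hk⟩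
    rw [this]
    have : f ((kE ⟨k, hk⟩ : LinearMap.ker f) : V) = 0 := (kE ⟨k, hk⟩).2
    rw [this, map_zero]
  have comp_c : e₂ (f (e₁ c)) = g c := by
    have h1 : e₁ c = ((cE ⟨c, hc⟩ : Cf) : V) := he₁c ⟨c, hc⟩
    rw [h1]
    have h2 : f ((cE ⟨c, hc⟩ : Cf) : V) = ((ef (cE ⟨c, hc⟩) : LinearMap.range f) : V) :=
      (hef _).symm
    rw [h2, he₂]
    have h3 : ef (cE ⟨c, hc⟩) = er.symm (eg ⟨c, hc⟩) := by
      simp [cE, LinearEquiv.trans_apply]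
    rw [h3, LinearEquiv.apply_symm_apply, heg]
  simp only [LinearMap.comp_apply, LinearEquiv.coe_coe, map_add]
  rw [show g k + g c = e₂ (f (e₁ k)) + e₂ (f (e₁ c)) by rw [comp_k, comp_c, hgk, zero_add],
    ← map_add, ← map_add]

/-- Equal-rank square matrices over a field are equivalent. -/
lemma exists_unit_mul_mul_of_rank_eq {n : ℕ} (A B : Matrix (Fin n) (Fin n) ℝ)
    (h : A.rank = B.rank) :
    ∃ P Q : Matrix (Fin n) (Fin n) ℝ, IsUnit P ∧ IsUnit Q ∧ B = P * A * Q := by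
  have h' : finrank ℝ (LinearMap.range (Matrix.toLin' A)) =
      finrank ℝ (LinearMap.range (Matrix.toLin' B)) := by
    rw [Matrix.toLin'_apply', Matrix.toLin'_apply']
    exact h
  obtain ⟨e₁, e₂, he⟩ := exists_equiv_comp_of_finrank_range_eq (Matrix.toLin' A)
    (Matrix.toLin' B) h'
  refine ⟨LinearMap.toMatrix' (e₂ : (Fin n → ℝ) →ₗ[ℝ] Fin n → ℝ),
    LinearMap.toMatrix' (e₁ : (Fin n → ℝ) →ₗ[ℝ] Fin n → ℝ), ?_, ?_, ?_⟩
  · exact ⟨⟨_, LinearMap.toMatrix' (e₂.symm : (Fin n → ℝ) →ₗ[ℝ] Fin n → ℝ),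
      by rw [← LinearMap.toMatrix'_comp]; simp,
      by rw [← LinearMap.toMatrix'_comp]; simp⟩, rfl⟩
  · exact ⟨⟨_, LinearMap.toMatrix' (e₁.symm : (Fin n → ℝ) →ₗ[ℝ] Fin n → ℝ),
      by rw [← LinearMap.toMatrix'_comp]; simp,
      by rw [← LinearMap.toMatrix'_comp]; simp⟩, rfl⟩
  · conv_lhs => rw [← LinearMap.toMatrix'_toLin' B]
    rw [he, LinearMap.toMatrix'_comp, LinearMap.toMatrix'_comp, LinearMap.toMatrix'_toLin',
      mul_assoc]

/-- If `φ : M_n(ℝ) → M_n(ℝ)` is multiplicative (not assumed additive or linear), then any two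
matrices of the same rank `r` have images of the same rank. -/
theorem stmt_2 (n : ℕ) (hn : 0 < n)
    (φ : Matrix (Fin n) (Fin n) ℝ → Matrix (Fin n) (Fin n) ℝ)
    (hφ : ∀ A B : Matrix (Fin n) (Fin n) ℝ, φ (A * B) = φ A * φ B)
    (r : ℕ) (hr : r ≤ n)
    (A B : Matrix (Fin n) (Fin n) ℝ)
    (hA : A.rank = r) (hB : B.rank = r) :
    (φ A).rank = (φ B).rank := by
  have key : ∀ M N : Matrix (Fin n) (Fin n) ℝ, M.rank = N.rank →
      (φ N).rank ≤ (φ M).rank := by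
    intro M N h
    obtain ⟨P, Q, _, _, hPQ⟩ := exists_unit_mul_mul_of_rank_eq M N h
    calc (φ N).rank = (φ P * (φ M * φ Q)).rank := by
          rw [hPQ, mul_assoc, hφ, hφ]
      _ ≤ (φ M * φ Q).rank := Matrix.rank_mul_le_right _ _
      _ ≤ (φ M).rank := Matrix.rank_mul_le_left _ _
  exact le_antisymm (key B A (hB.trans hA.symm)) (key A B (hA.trans hB.symm))
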